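/- arXiv:2410.20093 — 2 statements merged into one kernel-verified Lean document; each statement's English description precedes it below -/
import Mathlib

section
/- Let f : ℝ → ℂ be measurable with |f(p)| ≤ C (1+|p|)^{-(1+ε)} for some 0 < ε < 1 and constant C. Then the inverse Fourier transform V(r) = (2π)^{-1} ∫_ℝ e^{irp} f(p) dp is Hölder continuous of exponent ε on ℝ, i.e. V is bounded and there is a constant C' with |V(r) - V(r')| ≤ C' |r - r'|^ε for all r, r' with |r - r'| ≤ 1. -/
open MeasureTheory Real Complex Set

lemma intB {C ε t : ℝ} (hε0 : 0 < ε) (hε1 : ε < 1) (hC : 0 ≤ C) (ht0 : 0 < t) (ht1 : t ≤ 1) :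
    ∫ p : ℝ, min 2 (t * |p|) * (C * (1 + |p|) ^ (-(1+ε))) ≤ (4*C/(1-ε) + 4*C/ε) * t ^ ε := by
  set g : ℝ → ℝ := fun x => min 2 (t * x) * (C * (1 + x) ^ (-(1+ε))) with hg
  set R : ℝ := t⁻¹ with hRdef
  have hR0 : (0:ℝ) < R := by positivity
  have htinv : t * R = 1 := mul_inv_cancel₀ (ne_of_gt ht0)
  have hR1 : (1:ℝ) ≤ R := by nlinarith [inv_pos.2 ht0]
  have hRt : t * R ^ (-ε+1) = t ^ ε := by
    rw [hRdef, ← Real.rpow_neg_one t, ← Real.rpow_mul ht0.le,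
      show (-1:ℝ) * (-ε+1) = ε - 1 by ring]
    nth_rewrite 1 [← Real.rpow_one t]
    rw [← Real.rpow_add ht0]; norm_num
  have hRε : R ^ (-ε) = t ^ ε := by
    rw [hRdef, ← Real.rpow_neg_one t, ← Real.rpow_mul ht0.le]; norm_num
  have htε : (0:ℝ) ≤ t ^ ε := Real.rpow_nonneg ht0.le ε
  have hfinrank : ((Module.finrank ℝ ℝ : ℝ)) < 1 + ε := by
    rw [Module.finrank_self]; push_cast; linarith
  have hInt : Integrable (fun x : ℝ => (1 + ‖x‖) ^ (-(1+ε))) :=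
    integrable_one_add_norm hfinrank
  have hgmeas : Measurable g := by fun_prop
  have hgIoi : IntegrableOn g (Ioi 0) := by
    apply Integrable.mono' ((hInt.const_mul (2*C)).restrict (s := Ioi 0))
      hgmeas.aestronglyMeasurable.restrict
    filter_upwards [ae_restrict_mem measurableSet_Ioi] with x hx
    have hx0 : (0:ℝ) < x := hx
    have hA : 0 ≤ C * (1 + x) ^ (-(1+ε)) := by positivity
    have hmin0 : 0 ≤ min 2 (t * x) := le_min (by norm_num) (by positivity)
    have hng : ‖g x‖ = g x := by
      rw [Real.norm_eq_abs]; exact abs_of_nonneg (mul_nonneg hmin0 hA)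
    rw [hng, Real.norm_eq_abs, abs_of_pos hx0]
    calc min 2 (t*x) * (C * (1 + x) ^ (-(1+ε))) ≤ 2 * (C * (1 + x) ^ (-(1+ε))) :=
          mul_le_mul_of_nonneg_right (min_le_left _ _) hA
      _ = 2 * C * (1 + x) ^ (-(1+ε)) := by ring
  have hsplit : ∫ x in Ioi (0:ℝ), g x = (∫ x in Ioc 0 R, g x) + ∫ x in Ioi R, g x := by
    rw [← setIntegral_union (Ioc_disjoint_Ioi le_rfl) measurableSet_Ioi
      (hgIoi.mono_set Ioc_subset_Ioi_self) (hgIoi.mono_set (Ioi_subset_Ioi hR0.le)),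
      Ioc_union_Ioi_eq_Ioi hR0.le]
  -- part 1
  have h1 : ∫ x in Ioc (0:ℝ) R, g x ≤ 2*C/(1-ε) * t ^ ε := by
    have hcont : ContinuousOn (fun x : ℝ => (C*t) * (1+x) ^ (-ε)) (Icc 0 R) := by
      apply ContinuousOn.mul continuousOn_const
      apply ContinuousOn.rpow_const (continuousOn_const.add continuousOn_id)
      intro x hx
      left; have := hx.1; show (1:ℝ) + x ≠ 0; exact ne_of_gt (by linarith)
    have hint2 : IntegrableOn (fun x : ℝ => (C*t) * (1+x) ^ (-ε)) (Ioc 0 R) :=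
      (hcont.integrableOn_Icc).mono_set Ioc_subset_Icc_self
    have hmono : ∫ x in Ioc (0:ℝ) R, g x ≤ ∫ x in Ioc (0:ℝ) R, (C*t) * (1+x) ^ (-ε) := by
      apply setIntegral_mono_on (hgIoi.mono_set Ioc_subset_Ioi_self) hint2 measurableSet_Ioc
      intro x hx
      have hx0 : 0 < x := hx.1
      have h1x : (0:ℝ) < 1 + x := by linarith
      have hA : (0:ℝ) ≤ (1 + x) ^ (-(1+ε)) := by positivity
      calc min 2 (t*x) * (C * (1 + x) ^ (-(1+ε))) ≤ (t*x) * (C * (1 + x) ^ (-(1+ε))) :=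
            mul_le_mul_of_nonneg_right (min_le_right _ _) (by positivity)
        _ ≤ (t*(1+x)) * (C * (1 + x) ^ (-(1+ε))) := by
            apply mul_le_mul_of_nonneg_right _ (by positivity)
            nlinarith
        _ = (C*t) * ((1+x) ^ (1:ℝ) * (1 + x) ^ (-(1+ε))) := by rw [Real.rpow_one]; ring
        _ = (C*t) * (1+x) ^ (-ε) := by
            rw [← Real.rpow_add h1x]; norm_num
    have hcomp : ∫ x in Ioc (0:ℝ) R, (C*t) * (1+x) ^ (-ε)
        = (C*t) * (((1+R) ^ (-ε+1) - 1) / (-ε+1)) := by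
      rw [← intervalIntegral.integral_of_le hR0.le, intervalIntegral.integral_const_mul]
      congr 1
      rw [intervalIntegral.integral_comp_add_left (fun u : ℝ => u ^ (-ε)) 1]
      rw [integral_rpow (Or.inl (by linarith))]
      norm_num
    have hkey : (C*t) * (((1+R) ^ (-ε+1) - 1) / (-ε+1)) ≤ 2*C/(1-ε) * t ^ ε := by
      have hpos : (0:ℝ) < -ε + 1 := by linarith
      have h2R : (1+R) ^ (-ε+1) ≤ (2*R) ^ (-ε+1) :=
        Real.rpow_le_rpow (by linarith) (by linarith) (by linarith)
      have hRrw : (2*R) ^ (-ε+1) = 2 ^ (-ε+1) * R ^ (-ε+1) :=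
        Real.mul_rpow (by norm_num) hR0.le
      have h2e : (2:ℝ) ^ (-ε+1) ≤ 2 := by
        calc (2:ℝ) ^ (-ε+1) ≤ 2 ^ (1:ℝ) :=
              Real.rpow_le_rpow_of_exponent_le one_le_two (by linarith)
          _ = 2 := Real.rpow_one 2
      have hRnn : (0:ℝ) ≤ R ^ (-ε+1) := Real.rpow_nonneg hR0.le _
      have h3 : (1+R) ^ (-ε+1) - 1 ≤ 2 * R ^ (-ε+1) := by nlinarith
      calc (C*t) * (((1+R) ^ (-ε+1) - 1) / (-ε+1))
          ≤ (C*t) * ((2 * R ^ (-ε+1)) / (-ε+1)) := by gcongr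
        _ = (2*C/(-ε+1)) * (t * R ^ (-ε+1)) := by ring
        _ = (2*C/(-ε+1)) * t ^ ε := by rw [hRt]
        _ = 2*C/(1-ε) * t ^ ε := by ring_nf
    linarith [hcomp ▸ hkey]
  -- part 2
  have h2 : ∫ x in Ioi R, g x ≤ 2*C/ε * t ^ ε := by
    have hint2 : IntegrableOn (fun x : ℝ => 2*C*x ^ (-(1+ε))) (Ioi R) :=
      (integrableOn_Ioi_rpow_of_lt (by linarith) hR0).const_mul (2*C)
    have hmono : ∫ x in Ioi R, g x ≤ ∫ x in Ioi R, 2*C*x ^ (-(1+ε)) := by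
      apply setIntegral_mono_on (hgIoi.mono_set (Ioi_subset_Ioi hR0.le)) hint2 measurableSet_Ioi
      intro x hx
      have hx0 : (0:ℝ) < x := lt_trans hR0 hx
      have hle : (1+x) ^ (-(1+ε)) ≤ x ^ (-(1+ε)) :=
        Real.rpow_le_rpow_of_nonpos hx0 (by linarith) (by linarith)
      calc min 2 (t*x) * (C * (1 + x) ^ (-(1+ε))) ≤ 2 * (C * (1 + x) ^ (-(1+ε))) :=
            mul_le_mul_of_nonneg_right (min_le_left _ _) (by positivity)
        _ ≤ 2 * (C * x ^ (-(1+ε))) := by gcongr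
        _ = 2*C*x ^ (-(1+ε)) := by ring
    have hcomp : ∫ x in Ioi R, 2*C*x ^ (-(1+ε)) = 2*C*(R ^ (-ε) / ε) := by
      rw [integral_const_mul, integral_Ioi_rpow_of_lt (by linarith) hR0]
      rw [show -(1+ε)+1 = -ε by ring]
      field_simp
    have : 2*C*(R ^ (-ε) / ε) = 2*C/ε * t ^ ε := by rw [hRε]; ring
    linarith [hcomp ▸ hmono, this ▸ le_refl (2*C*(R ^ (-ε)/ε))]
  have habs : (∫ p : ℝ, min 2 (t * |p|) * (C * (1 + |p|) ^ (-(1+ε))))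
      = 2 * ∫ x in Ioi (0:ℝ), g x := integral_comp_abs (f := g)
  rw [habs, hsplit]
  have hfin : 2 * (2*C/(1-ε)*t^ε + 2*C/ε*t^ε) = (4*C/(1-ε) + 4*C/ε)*t^ε := by ring
  linarith

lemma expA (a b : ℝ) : ‖Complex.exp (Complex.I * a) - Complex.exp (Complex.I * b)‖ ≤ min 2 |a - b| := by
  apply le_min
  · calc ‖Complex.exp (Complex.I * a) - Complex.exp (Complex.I * b)‖
        ≤ ‖Complex.exp (Complex.I * a)‖ + ‖Complex.exp (Complex.I * b)‖ := norm_sub_le _ _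
    _ ≤ 2 := by
        simp [Complex.norm_exp]; norm_num
  · have hd : ∀ x : ℝ, HasDerivAt (fun y : ℝ => Complex.exp (Complex.I * y))
        (Complex.exp (Complex.I * x) * Complex.I) x := by
      intro x
      have := (((hasDerivAt_id (x:ℂ)).const_mul Complex.I).cexp).comp_ofReal
      simpa using this
    have := Convex.norm_image_sub_le_of_norm_hasDerivWithin_le
      (f := fun y : ℝ => Complex.exp (Complex.I * y)) (C := 1) (s := Set.univ)
      (fun x _ => (hd x).hasDerivWithinAt) (fun x _ => by
        simp [Complex.norm_exp]) convex_univ (Set.mem_univ b) (Set.mem_univ a)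
    simpa using this


/-- If `f` is measurable with `|f p| ≤ C (1+|p|)^{-(1+ε)}`, `0 < ε < 1`,
then the inverse Fourier transform `V r = (2π)⁻¹ ∫ e^{irp} f p dp` is bounded and
Hölder continuous of exponent `ε`. -/
theorem stmt0 (f : ℝ → ℂ) (C : ℝ) (ε : ℝ) (hε0 : 0 < ε) (hε1 : ε < 1)
    (hf_meas : Measurable f)
    (hf_bd : ∀ p : ℝ, ‖f p‖ ≤ C * (1 + |p|) ^ (-(1 + ε))) :
    ∃ C' : ℝ, (∀ r : ℝ, ‖(2 * π : ℝ)⁻¹ • ∫ p : ℝ, Complex.exp (Complex.I * r * p) * f p‖ ≤ C') ∧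
      ∀ r r' : ℝ, |r - r'| ≤ 1 →
        ‖((2 * π : ℝ)⁻¹ • ∫ p : ℝ, Complex.exp (Complex.I * r * p) * f p) -
          ((2 * π : ℝ)⁻¹ • ∫ p : ℝ, Complex.exp (Complex.I * r' * p) * f p)‖ ≤
          C' * |r - r'| ^ ε := by
  have hC : 0 ≤ C := le_trans (norm_nonneg (f 0)) (by simpa using hf_bd 0)
  have hfinrank : ((Module.finrank ℝ ℝ : ℝ)) < 1 + ε := by
    rw [Module.finrank_self]; push_cast; linarith
  have hInt : Integrable (fun x : ℝ => (1 + ‖x‖) ^ (-(1 + ε))) :=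
    integrable_one_add_norm hfinrank
  have hg0 : Integrable (fun p : ℝ => C * (1 + |p|) ^ (-(1 + ε))) := by
    simpa [Real.norm_eq_abs] using hInt.const_mul C
  have hnorm1 : ∀ (r : ℝ) (p : ℝ), ‖Complex.exp (Complex.I * r * p)‖ = 1 := by
    intro r p
    rw [Complex.norm_exp]
    simp
  have hbd' : ∀ (r : ℝ) (p : ℝ),
      ‖Complex.exp (Complex.I * r * p) * f p‖ ≤ C * (1 + |p|) ^ (-(1 + ε)) := by
    intro r p
    rw [norm_mul, hnorm1 r p, one_mul]
    exact hf_bd p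
  have hmeasr : ∀ r : ℝ, AEStronglyMeasurable
      (fun p : ℝ => Complex.exp (Complex.I * r * p) * f p) volume := by
    intro r
    exact (((continuous_const.mul Complex.continuous_ofReal).cexp).aestronglyMeasurable).mul
      hf_meas.aestronglyMeasurable
  have hint : ∀ r : ℝ, Integrable (fun p : ℝ => Complex.exp (Complex.I * r * p) * f p) :=
    fun r => hg0.mono' (hmeasr r) (ae_of_all _ (hbd' r))
  have hπ : (0:ℝ) < (2 * π)⁻¹ := by positivity
  set I0 := ∫ p : ℝ, C * (1 + |p|) ^ (-(1 + ε)) with hI0def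
  have hI0 : 0 ≤ I0 := integral_nonneg (fun p => by positivity)
  have hKnn : 0 ≤ (2*π)⁻¹ * (4*C/(1-ε) + 4*C/ε) := by
    have h1 : 0 ≤ 4*C/(1-ε) := div_nonneg (by linarith) (by linarith)
    have h2 : 0 ≤ 4*C/ε := div_nonneg (by linarith) hε0.le
    have := hπ.le
    positivity
  refine ⟨(2*π)⁻¹ * I0 + (2*π)⁻¹ * (4*C/(1-ε) + 4*C/ε), ?_, ?_⟩
  · intro r
    rw [norm_smul, Real.norm_eq_abs, abs_of_pos hπ]
    have h1 : ‖∫ p : ℝ, Complex.exp (Complex.I * r * p) * f p‖ ≤ I0 :=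
      le_trans (norm_integral_le_integral_norm _) (integral_mono (hint r).norm hg0 (hbd' r))
    nlinarith [mul_le_mul_of_nonneg_left h1 hπ.le]
  · intro r r' hrr
    by_cases heq : r = r'
    · subst heq
      simp [sub_self, Real.zero_rpow hε0.ne']
    · have ht0 : 0 < |r - r'| := abs_pos.2 (sub_ne_zero.2 heq)
      have hFGint : Integrable (fun p : ℝ =>
          (Complex.exp (Complex.I * r * p) - Complex.exp (Complex.I * r' * p)) * f p) := by
        have := (hint r).sub (hint r')
        exact this.congr (ae_of_all _ fun p => by simp [sub_mul])
      have hsub : ((2 * π : ℝ)⁻¹ • ∫ p : ℝ, Complex.exp (Complex.I * r * p) * f p) -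
          ((2 * π : ℝ)⁻¹ • ∫ p : ℝ, Complex.exp (Complex.I * r' * p) * f p)
          = (2 * π : ℝ)⁻¹ • ∫ p : ℝ,
            (Complex.exp (Complex.I * r * p) - Complex.exp (Complex.I * r' * p)) * f p := by
        rw [← smul_sub, ← integral_sub (hint r) (hint r')]
        congr 1
        apply integral_congr_ae (ae_of_all _ ?_)
        intro p
        ring
      have hptw : ∀ p : ℝ,
          ‖(Complex.exp (Complex.I * r * p) - Complex.exp (Complex.I * r' * p)) * f p‖ ≤
            min 2 (|r - r'| * |p|) * (C * (1 + |p|) ^ (-(1 + ε))) := by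
        intro p
        rw [norm_mul]
        have hAnn : (0:ℝ) ≤ C * (1 + |p|) ^ (-(1 + ε)) := by positivity
        have he : ‖Complex.exp (Complex.I * r * p) - Complex.exp (Complex.I * r' * p)‖ ≤
            min 2 (|r - r'| * |p|) := by
          have harg : (Complex.I * r * p : ℂ) = Complex.I * ((r * p : ℝ) : ℂ) := by
            push_cast; ring
          have harg' : (Complex.I * r' * p : ℂ) = Complex.I * ((r' * p : ℝ) : ℂ) := by
            push_cast; ring
          rw [harg, harg']
          refine le_trans (expA (r * p) (r' * p)) (le_of_eq ?_)
          rw [show r * p - r' * p = (r - r') * p from by ring, abs_mul]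
        exact mul_le_mul he (hf_bd p) (norm_nonneg _)
          (le_min (by norm_num) (by positivity))
      have hφint : Integrable (fun p : ℝ =>
          min 2 (|r - r'| * |p|) * (C * (1 + |p|) ^ (-(1 + ε)))) := by
        apply Integrable.mono' (hg0.const_mul 2) ?_ (ae_of_all _ ?_)
        · apply Measurable.aestronglyMeasurable
          fun_prop
        · intro p
          have hA : 0 ≤ C * (1 + |p|) ^ (-(1 + ε)) := by positivity
          have hm : 0 ≤ min 2 (|r - r'| * |p|) := le_min (by norm_num) (by positivity)
          rw [Real.norm_eq_abs, _root_.abs_of_nonneg (mul_nonneg hm hA)]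
          exact mul_le_mul_of_nonneg_right (min_le_left _ _) hA
      have hchain : ‖∫ p : ℝ,
          (Complex.exp (Complex.I * r * p) - Complex.exp (Complex.I * r' * p)) * f p‖ ≤
          (4*C/(1-ε) + 4*C/ε) * |r - r'| ^ ε :=
        le_trans (norm_integral_le_integral_norm _)
          (le_trans (integral_mono hFGint.norm hφint hptw)
            (intB hε0 hε1 hC ht0 hrr))
      rw [hsub, norm_smul, Real.norm_eq_abs, abs_of_pos hπ]
      have h2 := mul_le_mul_of_nonneg_left hchain hπ.le
      have h3 : 0 ≤ (2*π)⁻¹ * I0 := mul_nonneg hπ.le hI0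
      have h4 : 0 ≤ |r - r'| ^ ε := Real.rpow_nonneg (abs_nonneg _) ε
      nlinarith
end

section
/- Let f : ℝ → ℂ be Lipschitz with f(±∞) = 0 and |f'(p)| ≤ C (1+|p|)^{-(1+ε)}, 0 < ε < 1. Let w denote the continuous representative of the inverse Fourier transform of the function p ↦ i f'(p) (so that formally w(r) = r V(r), where V is the inverse Fourier transform of f). Then w(0) = 0. -/
open Filter Real Topology MeasureTheory

/-- under the hypotheses of Lemma `lemma-V-eps`, the (continuous) inverse
Fourier transform `w` of `p ↦ i f'(p)` vanishes at the origin: `w 0 = 0`. -/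
theorem stmt5 (f : ℝ → ℂ) (C ε : ℝ) (hε0 : 0 < ε) (hε1 : ε < 1)
    (hlip : ∃ L : NNReal, LipschitzWith L f)
    (hdiff : Differentiable ℝ f)
    (htop : Tendsto f atTop (𝓝 0)) (hbot : Tendsto f atBot (𝓝 0))
    (hder : ∀ p : ℝ, ‖deriv f p‖ ≤ C * (1 + |p|) ^ (-(1 + ε)))
    (w : ℝ → ℂ)
    (hw : ∀ r : ℝ, w r = (2 * π : ℝ)⁻¹ •
      ∫ p : ℝ, Complex.exp (Complex.I * r * p) * (Complex.I * deriv f p)) :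
    w 0 = 0 := by
  have hint : Integrable (fun p : ℝ => deriv f p) := by
    have hmaj : Integrable (fun p : ℝ => C * (1 + |p|) ^ (-(1 + ε))) := by
      have := (integrable_one_add_norm (E := ℝ) (μ := volume) (r := 1 + ε)
        (by simp; linarith)).const_mul C
      simpa [Real.norm_eq_abs] using this
    exact hmaj.mono' (measurable_deriv f).aestronglyMeasurable (ae_of_all _ hder)
  have hzero : ∫ p : ℝ, deriv f p = 0 := by
    have := integral_of_hasDerivAt_of_tendsto (f := f) (f' := deriv f)
      (fun x => (hdiff x).hasDerivAt) hint hbot htop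
    simpa using this
  rw [hw 0]
  simp only [Complex.ofReal_zero, mul_zero, zero_mul, Complex.exp_zero, one_mul]
  rw [MeasureTheory.integral_const_mul, hzero]
  simp
end
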